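/- Let ℍ be the hyperbolic upper half-plane with its hyperbolic distance dist, on which SL(2, ℝ) acts by Möbius transformations, and let SO(2) ⊆ SL(2, ℝ) be the stabilizer of the point i. Then for every C > 0 and every neighborhood U of the identity matrix in SO(2), there exists ε > 0 such that for all real t ≥ C and all k ∈ SO(2): if dist(k • (e^t · i), e^t · i) < ε, then k ∈ U ∪ (−U), i.e., k ∈ MU where M = {I, −I}. (Instance of the paper's Proposition 3.4 for G = SL(2, ℝ).) -/

import Mathlib

open scoped MatrixGroups
open Matrix Filter

lemma SO2_entries (k : SL(2, ℝ)) (hk : (↑k : Matrix (Fin 2) (Fin 2) ℝ)ᵀ * (↑k : Matrix (Fin 2) (Fin 2) ℝ) = 1) :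
    (↑k : Matrix (Fin 2) (Fin 2) ℝ) 1 1 = (↑k : Matrix (Fin 2) (Fin 2) ℝ) 0 0 ∧
    (↑k : Matrix (Fin 2) (Fin 2) ℝ) 1 0 = -(↑k : Matrix (Fin 2) (Fin 2) ℝ) 0 1 ∧
    ((↑k : Matrix (Fin 2) (Fin 2) ℝ) 0 0)^2 + ((↑k : Matrix (Fin 2) (Fin 2) ℝ) 0 1)^2 = 1 := by
  set a := (↑k : Matrix (Fin 2) (Fin 2) ℝ) 0 0
  set b := (↑k : Matrix (Fin 2) (Fin 2) ℝ) 0 1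
  set c := (↑k : Matrix (Fin 2) (Fin 2) ℝ) 1 0
  set d := (↑k : Matrix (Fin 2) (Fin 2) ℝ) 1 1
  have hdet : a * d - b * c = 1 := by
    have := k.2
    rw [Matrix.det_fin_two] at this
    linarith
  have h1 : a^2 + c^2 = 1 := by
    have := congr_fun (congr_fun hk 0) 0
    simp [Matrix.mul_apply, Fin.sum_univ_two, Matrix.one_apply] at this
    nlinarith [this]
  have h2 : a*b + c*d = 0 := by
    have := congr_fun (congr_fun hk 0) 1
    simp [Matrix.mul_apply, Fin.sum_univ_two, Matrix.one_apply] at this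
    nlinarith [this]
  have h4 : b^2 + d^2 = 1 := by
    have := congr_fun (congr_fun hk 1) 1
    simp [Matrix.mul_apply, Fin.sum_univ_two, Matrix.one_apply] at this
    nlinarith [this]
  have hd : d = a := by linear_combination a*hdet + c*h2 - d*h1
  have hc : c = -b := by linear_combination -c*h4 - b*hdet + d*h2
  exact ⟨hd, hc, by linear_combination h4 - (a+d)*hd⟩

lemma sinh_sq_disp (t : ℝ) (ht : 0 < t) (k : SL(2, ℝ))
    (hk : (↑k : Matrix (Fin 2) (Fin 2) ℝ)ᵀ * (↑k : Matrix (Fin 2) (Fin 2) ℝ) = 1)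
    (z : UpperHalfPlane) (hz : z = ⟨⟨0, Real.exp t⟩, Real.exp_pos t⟩) :
    Real.sinh (dist (k • z) z / 2) ^ 2
      = ((↑k : Matrix (Fin 2) (Fin 2) ℝ) 0 1)^2 * Real.sinh t ^ 2 := by
  obtain ⟨hd, hc, hab⟩ := SO2_entries k hk
  set a := (↑k : Matrix (Fin 2) (Fin 2) ℝ) 0 0 with ha_def
  set b := (↑k : Matrix (Fin 2) (Fin 2) ℝ) 0 1 with hb_def
  set y := Real.exp t with hy_def
  have hy : 0 < y := Real.exp_pos t
  have hy1 : 1 < y := by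
    rw [hy_def]; calc (1:ℝ) = Real.exp 0 := (Real.exp_zero).symm
    _ < Real.exp t := Real.exp_lt_exp.mpr ht
  have hzc : (z : ℂ) = (y : ℂ) * Complex.I := by
    rw [hz]; apply Complex.ext <;> simp <;> rfl
  have hzim : z.im = y := by rw [hz]; rfl
  have hden_pos : 0 < a^2 + b^2 * y^2 := by nlinarith [sq_nonneg b, sq_nonneg (b*y)]
  set D : ℂ := (a : ℂ) - (b : ℂ) * y * Complex.I with hD_def
  have hDnormSq : Complex.normSq D = a^2 + b^2 * y^2 := by
    simp [hD_def, Complex.normSq_apply]; ring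
  have hD : D ≠ 0 := by
    intro h
    rw [h, map_zero] at hDnormSq
    nlinarith
  have hcoe : (↑(k • z) : ℂ) = ((a:ℂ) * ((y:ℂ) * Complex.I) + b) / D := by
    rw [UpperHalfPlane.specialLinearGroup_apply, UpperHalfPlane.coe_mk]
    simp only [hzc, hc, hd, Algebra.algebraMap_self_apply]
    push_cast
    rw [hD_def]
    congr 1 <;> ring
  have hdiff : (↑(k • z) : ℂ) - (z : ℂ) = ((b * (1 - y^2) : ℝ) : ℂ) / D := by
    rw [hcoe, hzc]
    field_simp
    rw [hD_def]
    push_cast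
    linear_combination ((b:ℂ) * (y:ℂ)^2) * Complex.I_sq
  have hnormdiff : Complex.normSq ((↑(k • z) : ℂ) - (z : ℂ)) = b^2 * (1-y^2)^2 / (a^2 + b^2*y^2) := by
    rw [hdiff, Complex.normSq_div, hDnormSq, Complex.normSq_ofReal]
    ring
  have him : (k • z).im = y / (a^2 + b^2*y^2) := by
    rw [← UpperHalfPlane.coe_im, hcoe, Complex.div_im, hDnormSq]
    simp [hD_def]
    field_simp
    linear_combination (a^2+b^2*y^2)⁻¹ * hab
  have him_pos : 0 < (k • z).im := (k • z).2
  have h := UpperHalfPlane.sinh_half_dist (k • z) z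
  rw [Complex.dist_eq] at h
  have hprod : (0:ℝ) ≤ (k • z).im * z.im := by positivity
  have hsq : Real.sinh (dist (k • z) z / 2) ^ 2
      = Complex.normSq ((↑(k • z) : ℂ) - (z : ℂ)) / (4 * ((k • z).im * z.im)) := by
    rw [h, div_pow, mul_pow, Real.sq_sqrt hprod, Complex.sq_norm]
    norm_num
  rw [hsq, hnormdiff, him, hzim]
  have hsinh : Real.sinh t = (y^2 - 1) / (2*y) := by
    rw [Real.sinh_eq, Real.exp_neg, hy_def]
    field_simp
  rw [hsinh]
  have h1 : a^2 + b^2*y^2 ≠ 0 := ne_of_gt hden_pos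
  field_simp
  ring

noncomputable def rotMat (s : ℝ) : Matrix (Fin 2) (Fin 2) ℝ :=
  !![Real.sqrt (1 - s^2), s; -s, Real.sqrt (1 - s^2)]

lemma rotMat_zero : rotMat 0 = 1 := by
  ext i j
  fin_cases i <;> fin_cases j <;> simp [rotMat, Matrix.one_apply]

lemma rotMat_continuous : Continuous rotMat := by
  apply continuous_matrix
  intro i j
  fin_cases i <;> fin_cases j <;> simp [rotMat] <;> fun_prop

lemma rotMat_mem (s : ℝ) (hs : |s| ≤ 1) :
    rotMat s ∈ {g : Matrix (Fin 2) (Fin 2) ℝ | gᵀ * g = 1 ∧ g.det = 1} := by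
  have h1 : (0:ℝ) ≤ 1 - s^2 := by nlinarith [abs_nonneg s, sq_abs s]
  have h2 : Real.sqrt (1 - s^2) ^ 2 = 1 - s^2 := Real.sq_sqrt h1
  constructor
  · ext i j
    fin_cases i <;> fin_cases j <;>
      simp [rotMat, Matrix.mul_apply, Matrix.transpose_apply, Matrix.vecHead, Matrix.vecTail,
        Fin.sum_univ_two, Matrix.one_apply] <;> nlinarith [h2]
  · simp [rotMat, Matrix.det_fin_two_of]
    nlinarith [h2]

lemma rotMat_tendsto :
    Tendsto rotMat (nhds 0)
      (nhdsWithin (1 : Matrix (Fin 2) (Fin 2) ℝ)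
        {g : Matrix (Fin 2) (Fin 2) ℝ | gᵀ * g = 1 ∧ g.det = 1}) := by
  rw [tendsto_nhdsWithin_iff]
  constructor
  · have := rotMat_continuous.tendsto 0
    rwa [rotMat_zero] at this
  · have h : Set.Icc (-1:ℝ) 1 ∈ nhds (0:ℝ) := Icc_mem_nhds (by norm_num) (by norm_num)
    filter_upwards [h] with s hs
    exact rotMat_mem s (abs_le.mpr ⟨hs.1, hs.2⟩)

set_option maxHeartbeats 1000000 in
/-- **Instance of the paper's Proposition 3.4 for `G = SL(2, ℝ)`.**
Let `ℍ` be the hyperbolic upper half-plane with hyperbolic distance `dist`, on which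
`SL(2, ℝ)` acts by Möbius transformations, and identify `SO(2)` with the set of matrices `g`
with `gᵀ * g = 1` and `det g = 1` (the stabilizer of `i`).  For every `C > 0` and every
neighborhood `U` of the identity matrix within `SO(2)`, there exists `ε > 0` such that for
all `t ≥ C` and all `k ∈ SO(2) ⊆ SL(2, ℝ)`: if `dist (k • (e^t · i)) (e^t · i) < ε`, then
`k ∈ U ∪ (-U)`, i.e. `k ∈ MU` with `M = {I, -I}`. -/
theorem rotation_near_identity_of_small_displacement
    (C : ℝ) (hC : 0 < C)
    (U : Set (Matrix (Fin 2) (Fin 2) ℝ))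
    (hU_sub : U ⊆ {g : Matrix (Fin 2) (Fin 2) ℝ | gᵀ * g = 1 ∧ g.det = 1})
    (hU_nhds : U ∈ nhdsWithin (1 : Matrix (Fin 2) (Fin 2) ℝ)
      {g : Matrix (Fin 2) (Fin 2) ℝ | gᵀ * g = 1 ∧ g.det = 1}) :
    ∃ ε > (0:ℝ), ∀ t : ℝ, C ≤ t → ∀ k : SL(2, ℝ),
      (↑k : Matrix (Fin 2) (Fin 2) ℝ)ᵀ * (↑k : Matrix (Fin 2) (Fin 2) ℝ) = 1 →
      ∀ z : UpperHalfPlane, z = ⟨⟨0, Real.exp t⟩, Real.exp_pos t⟩ →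
      dist (k • z) z < ε →
      ((↑k : Matrix (Fin 2) (Fin 2) ℝ) ∈ U ∨
        -(↑k : Matrix (Fin 2) (Fin 2) ℝ) ∈ U) := by
  have hsinhC : 0 < Real.sinh C := Real.sinh_pos_iff.mpr hC
  have hev : ∀ᶠ s : ℝ in nhds 0, rotMat s ∈ U := rotMat_tendsto.eventually hU_nhds
  obtain ⟨β, hβpos, hβ⟩ := Metric.eventually_nhds_iff.mp hev
  set β' := min β 1 with hβ'_def
  have hβ'pos : 0 < β' := lt_min hβpos one_pos
  have hβ'le1 : β' ≤ 1 := min_le_right _ _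
  have hβ'leβ : β' ≤ β := min_le_left _ _
  have hεpos : 0 < 2 * Real.arsinh (β'/2 * Real.sinh C) := by
    have := Real.arsinh_pos_iff.mpr (by positivity : (0:ℝ) < β'/2 * Real.sinh C)
    linarith
  refine ⟨2 * Real.arsinh (β'/2 * Real.sinh C), hεpos, ?_⟩
  intro t hCt k hk z hz hdist
  obtain ⟨hd, hc, hab⟩ := SO2_entries k hk
  set a := (↑k : Matrix (Fin 2) (Fin 2) ℝ) 0 0 with ha_def
  set b := (↑k : Matrix (Fin 2) (Fin 2) ℝ) 0 1 with hb_def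
  have ht : 0 < t := lt_of_lt_of_le hC hCt
  have key := sinh_sq_disp t ht k hk z hz
  have hsht : Real.sinh C ≤ Real.sinh t := Real.sinh_le_sinh.mpr hCt
  have hd2 : Real.sinh (dist (k • z) z / 2) < β'/2 * Real.sinh C := by
    have h1 : dist (k • z) z / 2 < Real.arsinh (β'/2 * Real.sinh C) := by linarith
    calc Real.sinh (dist (k • z) z / 2) < Real.sinh (Real.arsinh (β'/2 * Real.sinh C)) :=
          Real.sinh_lt_sinh.mpr h1
      _ = β'/2 * Real.sinh C := Real.sinh_arsinh _
  have hnn : 0 ≤ Real.sinh (dist (k • z) z / 2) :=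
    Real.sinh_nonneg_iff.mpr (by positivity)
  have hbb : |b| < β'/2 := by
    apply lt_of_pow_lt_pow_left₀ 2 (by positivity)
    rw [sq_abs]
    have h1 : b^2 * Real.sinh t ^2 < (β'/2 * Real.sinh C)^2 := by
      rw [← key]; nlinarith [hnn, hd2]
    have hss : Real.sinh C ^ 2 ≤ Real.sinh t ^ 2 := by nlinarith
    nlinarith [h1, hss, sq_nonneg b, mul_pos hsinhC hsinhC,
      mul_nonneg (sq_nonneg (β'/2)) (sub_nonneg.mpr hss),
      mul_nonneg (sq_nonneg b) (sub_nonneg.mpr hss)]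
  have hb1 : |b| < 1 := by linarith
  have hbβ : |b| < β := by linarith
  have ha0 : a ≠ 0 := by
    intro h
    have hb2 : b^2 = 1 := by
      have := hab
      rw [h] at this
      linarith
    nlinarith [sq_abs b, abs_nonneg b, hb2, hb1]
  have hsq : Real.sqrt (1 - b^2) = |a| := by
    rw [show (1:ℝ) - b^2 = a^2 by linarith, Real.sqrt_sq_eq_abs]
  rcases lt_or_gt_of_ne ha0 with hlt | hgt
  · right
    have heq : -(↑k : Matrix (Fin 2) (Fin 2) ℝ) = rotMat (-b) := by
      ext i j
      fin_cases i <;> fin_cases j <;>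
        simp [rotMat, Matrix.neg_apply, hc, hd, hsq, abs_of_neg hlt, neg_sq] <;>
        rfl
    rw [heq]
    apply hβ
    rw [Real.dist_eq]
    simpa using hbβ
  · left
    have heq : (↑k : Matrix (Fin 2) (Fin 2) ℝ) = rotMat b := by
      ext i j
      fin_cases i <;> fin_cases j <;>
        simp [rotMat, hc, hd, hsq, abs_of_pos hgt] <;> rfl
    rw [heq]
    apply hβ
    rw [Real.dist_eq]
    simpa using hbβ
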